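/- Let A ∈ ℝ and let φ : [0,∞) → [0,∞) be locally integrable. Then the function t ↦ ∑_{n≥1} |A|^n ∫_0^t φ^{*n}(s) ds is finite for every t ≥ 0 and locally bounded on [0,∞). -/

import Mathlib

open MeasureTheory Filter Topology

/-- Convolution powers: `convPow ψ n = ψ^{*(n+1)}`, i.e. `convPow ψ 0 = ψ` and
`convPow ψ (n+1) t = ∫_0^t ψ(t-s) ψ^{*(n+1)}(s) ds`. -/
noncomputable def convPow (ψ : ℝ → ℝ) : ℕ → ℝ → ℝ
  | 0 => ψ
  | n + 1 => fun t => ∫ s in (0:ℝ)..t, ψ (t - s) * convPow ψ n s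

lemma ofReal_setIntegral_le {f : ℝ → ℝ} {s : Set ℝ} (hf : ∀ x ∈ s, 0 ≤ f x)
    (hs : MeasurableSet s) :
    ENNReal.ofReal (∫ x in s, f x) ≤ ∫⁻ x in s, ENNReal.ofReal (f x) := by
  calc ENNReal.ofReal (∫ x in s, f x) ≤ (‖∫ x in s, f x‖₊ : ENNReal) := by
        rw [← enorm_eq_nnnorm, ← ofReal_norm, Real.norm_eq_abs]
        exact ENNReal.ofReal_le_ofReal (le_abs_self _)
    _ ≤ ∫⁻ x in s, (‖f x‖₊ : ENNReal) := enorm_integral_le_lintegral_enorm _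
    _ = ∫⁻ x in s, ENNReal.ofReal (f x) := by
        refine setLIntegral_congr_fun hs (fun x hx => ?_)
        rw [← enorm_eq_nnnorm, ← ofReal_norm, Real.norm_eq_abs, abs_of_nonneg (hf x hx)]

lemma convPow_measurable {φ : ℝ → ℝ} (hφ : Measurable φ) (n : ℕ) :
    Measurable (convPow φ n) := by
  induction n with
  | zero => exact hφ
  | succ n ih =>
    have hset1 : MeasurableSet {q : ℝ × ℝ | 0 < q.2 ∧ q.2 ≤ q.1} :=
      (measurableSet_lt measurable_const measurable_snd).inter
        (measurableSet_le measurable_snd measurable_fst)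
    have hset2 : MeasurableSet {q : ℝ × ℝ | q.1 < q.2 ∧ q.2 ≤ 0} :=
      (measurableSet_lt measurable_fst measurable_snd).inter
        (measurableSet_le measurable_snd measurable_const)
    have hF : Measurable fun q : ℝ × ℝ => φ (q.1 - q.2) * convPow φ n q.2 :=
      (hφ.comp (measurable_fst.sub measurable_snd)).mul (ih.comp measurable_snd)
    have h1 : StronglyMeasurable fun q : ℝ × ℝ =>
        (Set.Ioc (0:ℝ) q.1).indicator (fun s => φ (q.1 - s) * convPow φ n s) q.2 := by
      have : (fun q : ℝ × ℝ =>
          (Set.Ioc (0:ℝ) q.1).indicator (fun s => φ (q.1 - s) * convPow φ n s) q.2)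
          = fun q : ℝ × ℝ => if (0 < q.2 ∧ q.2 ≤ q.1) then φ (q.1 - q.2) * convPow φ n q.2
            else 0 := by
        funext q; simp [Set.indicator_apply, Set.mem_Ioc]
      rw [this]
      exact (Measurable.ite hset1 hF measurable_const).stronglyMeasurable
    have h2 : StronglyMeasurable fun q : ℝ × ℝ =>
        (Set.Ioc q.1 (0:ℝ)).indicator (fun s => φ (q.1 - s) * convPow φ n s) q.2 := by
      have : (fun q : ℝ × ℝ =>
          (Set.Ioc q.1 (0:ℝ)).indicator (fun s => φ (q.1 - s) * convPow φ n s) q.2)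
          = fun q : ℝ × ℝ => if (q.1 < q.2 ∧ q.2 ≤ 0) then φ (q.1 - q.2) * convPow φ n q.2
            else 0 := by
        funext q; simp [Set.indicator_apply, Set.mem_Ioc]
      rw [this]
      exact (Measurable.ite hset2 hF measurable_const).stronglyMeasurable
    have key : (convPow φ (n + 1)) = fun t =>
        (∫ s, (Set.Ioc (0:ℝ) t).indicator (fun s => φ (t - s) * convPow φ n s) s)
          - ∫ s, (Set.Ioc t (0:ℝ)).indicator (fun s => φ (t - s) * convPow φ n s) s := by
      funext t
      show (∫ s in Set.Ioc (0:ℝ) t, φ (t - s) * convPow φ n s)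
          - (∫ s in Set.Ioc t (0:ℝ), φ (t - s) * convPow φ n s) = _
      rw [← integral_indicator measurableSet_Ioc, ← integral_indicator measurableSet_Ioc]
    rw [key]
    exact ((h1.integral_prod_right').sub (h2.integral_prod_right')).measurable

lemma convPow_nonneg {φ : ℝ → ℝ} (hφ : ∀ s, 0 ≤ φ s) :
    ∀ n, ∀ t : ℝ, 0 ≤ t → 0 ≤ convPow φ n t := by
  intro n
  induction n with
  | zero => exact fun t _ => hφ t
  | succ n ih =>
    intro t ht
    exact intervalIntegral.integral_nonneg ht fun u hu => mul_nonneg (hφ _) (ih u hu.1)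

lemma convPow_key {φ : ℝ → ℝ} (hφmeas : Measurable φ) (hφnonneg : ∀ s, 0 ≤ φ s)
    {T L : ℝ} (hT : 0 ≤ T) (hL : 0 ≤ L) (hφint : IntegrableOn φ (Set.Ioc 0 T)) (n : ℕ) :
    ∫⁻ s in Set.Ioc (0:ℝ) T, ENNReal.ofReal (Real.exp (-L * s) * convPow φ n s)
      ≤ (∫⁻ s in Set.Ioc (0:ℝ) T, ENNReal.ofReal (Real.exp (-L * s) * φ s)) ^ (n + 1) := by
  set f : ℝ → ENNReal := fun u => ENNReal.ofReal (Real.exp (-L * u) * φ u) with hf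
  set R : ENNReal := ∫⁻ s in Set.Ioc (0:ℝ) T, f s with hR
  have hfmeas : Measurable f :=
    ((Real.measurable_exp.comp (measurable_const.mul measurable_id)).mul hφmeas).ennreal_ofReal
  have hRfin : R ≠ ⊤ := by
    have hle : R ≤ ∫⁻ s in Set.Ioc (0:ℝ) T, ENNReal.ofReal (φ s) := by
      rw [hR]
      refine setLIntegral_mono hφmeas.ennreal_ofReal fun x hx => ENNReal.ofReal_le_ofReal ?_
      have h1 : Real.exp (-L * x) ≤ 1 := by
        rw [Real.exp_le_one_iff]
        nlinarith [mul_nonneg hL hx.1.le]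
      nlinarith [hφnonneg x, Real.exp_nonneg (-L * x)]
    refine ne_of_lt (lt_of_le_of_lt hle ?_)
    rw [← ofReal_integral_eq_lintegral_ofReal hφint
      (Filter.Eventually.of_forall fun x => hφnonneg x)]
    exact ENNReal.ofReal_lt_top
  induction n with
  | zero =>
    rw [pow_one, hR]
    exact le_of_eq rfl
  | succ n ih =>
    set G : ℝ → ENNReal := fun s => ENNReal.ofReal (Real.exp (-L * s) * convPow φ n s) with hG
    have hGmeas : Measurable G :=
      ((Real.measurable_exp.comp (measurable_const.mul measurable_id)).mul
        (convPow_measurable hφmeas n)).ennreal_ofReal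
    -- step 1: pointwise bound by a double integral
    have step1 : ∫⁻ t in Set.Ioc (0:ℝ) T,
        ENNReal.ofReal (Real.exp (-L * t) * convPow φ (n+1) t)
        ≤ ∫⁻ t in Set.Ioc (0:ℝ) T, ∫⁻ s in Set.Ioc (0:ℝ) t, f (t - s) * G s := by
      refine setLIntegral_mono' measurableSet_Ioc fun t htT => ?_
      have ht : (0:ℝ) < t := htT.1
      have hnn : ∀ s ∈ Set.Ioc (0:ℝ) t, 0 ≤ φ (t - s) * convPow φ n s := fun s hs =>
        mul_nonneg (hφnonneg _) (convPow_nonneg hφnonneg n s hs.1.le)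
      have e1 : convPow φ (n+1) t = ∫ s in Set.Ioc (0:ℝ) t, φ (t - s) * convPow φ n s := by
        show (∫ s in (0:ℝ)..t, φ (t - s) * convPow φ n s) = _
        rw [intervalIntegral.integral_of_le ht.le]
      calc ENNReal.ofReal (Real.exp (-L * t) * convPow φ (n+1) t)
          = ENNReal.ofReal (Real.exp (-L * t)) * ENNReal.ofReal (convPow φ (n+1) t) :=
            ENNReal.ofReal_mul (Real.exp_nonneg _)
        _ ≤ ENNReal.ofReal (Real.exp (-L * t)) *
            ∫⁻ s in Set.Ioc (0:ℝ) t, ENNReal.ofReal (φ (t - s) * convPow φ n s) := by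
            rw [e1]
            exact mul_le_mul_right (ofReal_setIntegral_le hnn measurableSet_Ioc) _
        _ = ∫⁻ s in Set.Ioc (0:ℝ) t,
            ENNReal.ofReal (Real.exp (-L * t)) * ENNReal.ofReal (φ (t - s) * convPow φ n s) :=
            (lintegral_const_mul' _ _ ENNReal.ofReal_ne_top).symm
        _ = ∫⁻ s in Set.Ioc (0:ℝ) t, f (t - s) * G s := by
            refine setLIntegral_congr_fun measurableSet_Ioc
              (fun s hs => ?_)
            have h1 : Real.exp (-L * t) * (φ (t - s) * convPow φ n s)
                = (Real.exp (-L * (t - s)) * φ (t - s))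
                  * (Real.exp (-L * s) * convPow φ n s) := by
              rw [show -L * t = -L * (t - s) + -L * s by ring, Real.exp_add]
              ring
            calc ENNReal.ofReal (Real.exp (-L * t))
                  * ENNReal.ofReal (φ (t - s) * convPow φ n s)
                = ENNReal.ofReal (Real.exp (-L * t) * (φ (t - s) * convPow φ n s)) :=
                  (ENNReal.ofReal_mul (Real.exp_nonneg _)).symm
              _ = ENNReal.ofReal ((Real.exp (-L * (t - s)) * φ (t - s))
                  * (Real.exp (-L * s) * convPow φ n s)) := by rw [h1]
              _ = f (t - s) * G s :=
                  ENNReal.ofReal_mul (mul_nonneg (Real.exp_nonneg _) (hφnonneg _))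
    -- step 2: swap the double integral and estimate
    have hmeas2 : Measurable fun p : ℝ × ℝ =>
        (if p.2 ≤ p.1 then f (p.1 - p.2) else 0) * G p.2 := by
      refine Measurable.mul ?_ (hGmeas.comp measurable_snd)
      exact Measurable.ite (measurableSet_le measurable_snd measurable_fst)
        (hfmeas.comp (measurable_fst.sub measurable_snd)) measurable_const
    have inner_eq : ∀ t ∈ Set.Ioc (0:ℝ) T,
        (∫⁻ s in Set.Ioc (0:ℝ) t, f (t - s) * G s)
          = ∫⁻ s in Set.Ioc (0:ℝ) T, (if s ≤ t then f (t - s) else 0) * G s := by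
      intro t htT
      have hsub : Set.Ioc (0:ℝ) t = Set.Iic t ∩ Set.Ioc 0 T := by
        ext x
        simp only [Set.mem_Ioc, Set.mem_inter_iff, Set.mem_Iic]
        constructor
        · rintro ⟨h1, h2⟩; exact ⟨h2, h1, h2.trans htT.2⟩
        · rintro ⟨h1, h2, _⟩; exact ⟨h2, h1⟩
      rw [hsub, ← Measure.restrict_restrict measurableSet_Iic, ← lintegral_indicator
        measurableSet_Iic]
      refine setLIntegral_congr_fun measurableSet_Ioc
        (fun s _ => ?_)
      by_cases h : s ≤ t <;> simp [Set.indicator_apply, Set.mem_Iic, h]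
    have inner_bound : ∀ s ∈ Set.Ioc (0:ℝ) T,
        (∫⁻ t in Set.Ioc (0:ℝ) T, if s ≤ t then f (t - s) else 0) ≤ R := by
      intro s hsT
      have hs : (0:ℝ) < s := hsT.1
      have key1 : (∫⁻ t in Set.Ioc (0:ℝ) T, if s ≤ t then f (t - s) else 0)
          ≤ ∫⁻ t, (Set.Icc (0:ℝ) T).indicator f (t - s) := by
        rw [← lintegral_indicator measurableSet_Ioc]
        refine lintegral_mono fun t => ?_
        rw [Set.indicator_apply]
        by_cases h1 : t ∈ Set.Ioc (0:ℝ) T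
        · by_cases h2 : s ≤ t
          · simp only [h1, if_pos, h2]
            rw [Set.indicator_of_mem (by constructor <;> [linarith [hs]; linarith [h1.2]])]
          · simp [h1, h2]
        · simp [h1]
      have key2 : (∫⁻ t, (Set.Icc (0:ℝ) T).indicator f (t - s)) = R := by
        rw [lintegral_sub_right_eq_self ((Set.Icc (0:ℝ) T).indicator f) s,
          lintegral_indicator measurableSet_Icc, hR,
          ← Measure.restrict_congr_set MeasureTheory.Ioc_ae_eq_Icc]
      exact key1.trans key2.le
    calc ∫⁻ t in Set.Ioc (0:ℝ) T, ENNReal.ofReal (Real.exp (-L * t) * convPow φ (n+1) t)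
        ≤ ∫⁻ t in Set.Ioc (0:ℝ) T, ∫⁻ s in Set.Ioc (0:ℝ) T,
            (if s ≤ t then f (t - s) else 0) * G s := by
          refine step1.trans (le_of_eq ?_)
          exact setLIntegral_congr_fun measurableSet_Ioc
            inner_eq
      _ = ∫⁻ s in Set.Ioc (0:ℝ) T, ∫⁻ t in Set.Ioc (0:ℝ) T,
            (if s ≤ t then f (t - s) else 0) * G s :=
          lintegral_lintegral_swap (hmeas2.aemeasurable)
      _ = ∫⁻ s in Set.Ioc (0:ℝ) T,
            (∫⁻ t in Set.Ioc (0:ℝ) T, if s ≤ t then f (t - s) else 0) * G s := by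
          refine setLIntegral_congr_fun measurableSet_Ioc
            (fun s _ => ?_)
          exact lintegral_mul_const' _ _ ENNReal.ofReal_ne_top
      _ ≤ ∫⁻ s in Set.Ioc (0:ℝ) T, R * G s := by
          refine setLIntegral_mono' measurableSet_Ioc fun s hs => ?_
          exact mul_le_mul_left (inner_bound s hs) _
      _ = R * ∫⁻ s in Set.Ioc (0:ℝ) T, G s := lintegral_const_mul' _ _ hRfin
      _ ≤ R * R ^ (n + 1) := mul_le_mul_right ih _
      _ = R ^ (n + 1 + 1) := by ring

theorem stmt13
    (A : ℝ)
    (φ : ℝ → ℝ) (hφmeas : Measurable φ) (hφnonneg : ∀ s, 0 ≤ φ s)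
    (hφloc : ∀ t ≥ (0:ℝ), IntegrableOn φ (Set.Icc 0 t)) :
    (∀ t ≥ (0:ℝ),
      Summable (fun n : ℕ => |A| ^ (n + 1) * ∫ s in (0:ℝ)..t, convPow φ n s)) ∧
    (∀ t ≥ (0:ℝ), ∃ C, ∀ u ∈ Set.Icc (0:ℝ) t,
      (∑' n : ℕ, |A| ^ (n + 1) * ∫ s in (0:ℝ)..u, convPow φ n s) ≤ C) := by
  have hterm_nonneg : ∀ u : ℝ, 0 ≤ u → ∀ n : ℕ,
      0 ≤ |A| ^ (n + 1) * ∫ s in (0:ℝ)..u, convPow φ n s := fun u hu n =>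
    mul_nonneg (pow_nonneg (abs_nonneg A) _)
      (intervalIntegral.integral_nonneg hu fun x hx => convPow_nonneg hφnonneg n x hx.1)
  have master : ∀ T : ℝ, 0 ≤ T → ∃ C r : ℝ, 0 ≤ C ∧ 0 ≤ r ∧ r < 1 ∧
      ∀ u ∈ Set.Icc (0:ℝ) T, ∀ n : ℕ,
        |A| ^ (n + 1) * (∫ s in (0:ℝ)..u, convPow φ n s) ≤ C * r ^ n := by
    intro T hT
    have hφint : IntegrableOn φ (Set.Ioc 0 T) := (hφloc T hT).mono_set Set.Ioc_subset_Icc_self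
    -- choose L with |A| * ρ L < 1 via dominated convergence
    have hwmeas : ∀ L : ℝ, AEStronglyMeasurable (fun s => Real.exp (-L * s) * φ s)
        (volume.restrict (Set.Ioc (0:ℝ) T)) := fun L =>
      (((Real.measurable_exp.comp (measurable_const.mul measurable_id)).mul
        hφmeas)).aestronglyMeasurable
    have htend : Tendsto (fun k : ℕ => ∫ s in Set.Ioc (0:ℝ) T, Real.exp (-(k:ℝ) * s) * φ s)
        atTop (𝓝 (∫ s in Set.Ioc (0:ℝ) T, (0:ℝ))) := by
      refine tendsto_integral_of_dominated_convergence φ (fun k => hwmeas _) hφint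
        (fun k => ?_) ?_
      · refine (ae_restrict_iff' measurableSet_Ioc).2 (Filter.Eventually.of_forall
          fun x hx => ?_)
        rw [Real.norm_eq_abs, abs_of_nonneg (mul_nonneg (Real.exp_nonneg _) (hφnonneg _))]
        have h1 : Real.exp (-(k:ℝ) * x) ≤ 1 := by
          rw [Real.exp_le_one_iff]
          nlinarith [mul_nonneg (Nat.cast_nonneg (α := ℝ) k) hx.1.le]
        nlinarith [hφnonneg x, Real.exp_nonneg (-(k:ℝ) * x)]
      · refine (ae_restrict_iff' measurableSet_Ioc).2 (Filter.Eventually.of_forall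
          fun x hx => ?_)
        have h2 : Tendsto (fun k : ℕ => Real.exp (-(k:ℝ) * x)) atTop (𝓝 0) := by
          have hxx : ∀ k : ℕ, Real.exp (-(k:ℝ) * x) = (Real.exp (-x)) ^ k := by
            intro k
            rw [← Real.exp_nat_mul]
            ring_nf
          simp_rw [hxx]
          exact tendsto_pow_atTop_nhds_zero_of_lt_one (Real.exp_nonneg _)
            (by rw [Real.exp_lt_one_iff, neg_lt_zero]; exact hx.1)
        simpa using h2.mul_const (φ x)
    rw [integral_zero] at htend
    have hev : ∀ᶠ k : ℕ in atTop,
        |A| * ∫ s in Set.Ioc (0:ℝ) T, Real.exp (-(k:ℝ) * s) * φ s < 1 := by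
      have := (htend.const_mul |A|)
      rw [mul_zero] at this
      exact this.eventually_lt_const one_pos
    obtain ⟨k, hk⟩ := hev.exists
    set L : ℝ := (k : ℝ) with hLdef
    have hL : 0 ≤ L := Nat.cast_nonneg k
    set ρ : ℝ := ∫ s in Set.Ioc (0:ℝ) T, Real.exp (-L * s) * φ s with hρdef
    have hρ0 : 0 ≤ ρ := setIntegral_nonneg measurableSet_Ioc
      fun x _ => mul_nonneg (Real.exp_nonneg _) (hφnonneg _)
    have hρ1 : |A| * ρ < 1 := hk
    have hwint : IntegrableOn (fun s => Real.exp (-L * s) * φ s) (Set.Ioc 0 T) := by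
      refine hφint.mono' (hwmeas L) ?_
      refine (ae_restrict_iff' measurableSet_Ioc).2 (Filter.Eventually.of_forall
        fun x hx => ?_)
      rw [Real.norm_eq_abs, abs_of_nonneg (mul_nonneg (Real.exp_nonneg _) (hφnonneg _))]
      have h1 : Real.exp (-L * x) ≤ 1 := by
        rw [Real.exp_le_one_iff]
        nlinarith [mul_nonneg hL hx.1.le]
      nlinarith [hφnonneg x, Real.exp_nonneg (-L * x)]
    have hRρ : (∫⁻ s in Set.Ioc (0:ℝ) T, ENNReal.ofReal (Real.exp (-L * s) * φ s))
        = ENNReal.ofReal ρ :=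
      (ofReal_integral_eq_lintegral_ofReal hwint (Filter.Eventually.of_forall
        fun x => mul_nonneg (Real.exp_nonneg _) (hφnonneg _))).symm
    refine ⟨Real.exp (L * T) * (|A| * ρ), |A| * ρ,
      mul_nonneg (Real.exp_nonneg _) (mul_nonneg (abs_nonneg A) hρ0),
      mul_nonneg (abs_nonneg A) hρ0, hρ1, fun u hu n => ?_⟩
    have h1 : ENNReal.ofReal (∫ s in (0:ℝ)..u, convPow φ n s)
        ≤ ENNReal.ofReal (Real.exp (L * T) * ρ ^ (n + 1)) := by
      rw [intervalIntegral.integral_of_le hu.1]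
      calc ENNReal.ofReal (∫ s in Set.Ioc (0:ℝ) u, convPow φ n s)
          ≤ ∫⁻ s in Set.Ioc (0:ℝ) u, ENNReal.ofReal (convPow φ n s) :=
            ofReal_setIntegral_le (fun x hx => convPow_nonneg hφnonneg n x hx.1.le)
              measurableSet_Ioc
        _ ≤ ∫⁻ s in Set.Ioc (0:ℝ) u, ENNReal.ofReal (Real.exp (L * T)) *
              ENNReal.ofReal (Real.exp (-L * s) * convPow φ n s) := by
            refine setLIntegral_mono' measurableSet_Ioc fun x hx => ?_
            rw [← ENNReal.ofReal_mul (Real.exp_nonneg _)]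
            refine ENNReal.ofReal_le_ofReal ?_
            have hc := convPow_nonneg hφnonneg n x hx.1.le
            have hone : (1:ℝ) ≤ Real.exp (L * T) * Real.exp (-L * x) := by
              rw [← Real.exp_add]
              have : (0:ℝ) ≤ L * T + -L * x := by
                nlinarith [mul_nonneg hL (sub_nonneg.2 (hx.2.trans hu.2))]
              exact Real.one_le_exp this
            nlinarith [hc, hone]
        _ = ENNReal.ofReal (Real.exp (L * T)) *
              ∫⁻ s in Set.Ioc (0:ℝ) u, ENNReal.ofReal (Real.exp (-L * s) * convPow φ n s) :=
            lintegral_const_mul' _ _ ENNReal.ofReal_ne_top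
        _ ≤ ENNReal.ofReal (Real.exp (L * T)) *
              ∫⁻ s in Set.Ioc (0:ℝ) T, ENNReal.ofReal (Real.exp (-L * s) * convPow φ n s) :=
            mul_le_mul_right (lintegral_mono_set (Set.Ioc_subset_Ioc_right hu.2)) _
        _ ≤ ENNReal.ofReal (Real.exp (L * T)) *
              (∫⁻ s in Set.Ioc (0:ℝ) T, ENNReal.ofReal (Real.exp (-L * s) * φ s)) ^ (n + 1) :=
            mul_le_mul_right (convPow_key hφmeas hφnonneg hT hL hφint n) _
        _ = ENNReal.ofReal (Real.exp (L * T) * ρ ^ (n + 1)) := by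
            rw [hRρ, ← ENNReal.ofReal_pow hρ0, ← ENNReal.ofReal_mul (Real.exp_nonneg _)]
    have h2 : (∫ s in (0:ℝ)..u, convPow φ n s) ≤ Real.exp (L * T) * ρ ^ (n + 1) :=
      (ENNReal.ofReal_le_ofReal_iff
        (mul_nonneg (Real.exp_nonneg _) (pow_nonneg hρ0 _))).1 h1
    calc |A| ^ (n + 1) * (∫ s in (0:ℝ)..u, convPow φ n s)
        ≤ |A| ^ (n + 1) * (Real.exp (L * T) * ρ ^ (n + 1)) :=
          mul_le_mul_of_nonneg_left h2 (pow_nonneg (abs_nonneg A) _)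
      _ = Real.exp (L * T) * (|A| * ρ) * (|A| * ρ) ^ n := by
          rw [mul_pow]
          ring
  constructor
  · intro t ht
    obtain ⟨C, r, hC, hr0, hr1, hbnd⟩ := master t ht
    refine Summable.of_nonneg_of_le (hterm_nonneg t ht) (hbnd t ⟨ht, le_refl t⟩) ?_
    exact (summable_geometric_of_lt_one hr0 hr1).mul_left C
  · intro t ht
    obtain ⟨C, r, hC, hr0, hr1, hbnd⟩ := master t ht
    have hgeom : Summable (fun n : ℕ => C * r ^ n) :=
      (summable_geometric_of_lt_one hr0 hr1).mul_left C
    refine ⟨∑' n : ℕ, C * r ^ n, fun u hu => ?_⟩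
    have hsum : Summable (fun n : ℕ => |A| ^ (n + 1) * ∫ s in (0:ℝ)..u, convPow φ n s) :=
      Summable.of_nonneg_of_le (hterm_nonneg u hu.1) (hbnd u hu) hgeom
    exact Summable.tsum_le_tsum (hbnd u hu) hsum hgeom
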